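/- arXiv:2305.12967 — 3 statements merged into one kernel-verified Lean document; each statement's English description precedes it below -/
import Mathlib

section
/- Let k > 0 and c > 0 be real constants, and define the softplus function σ(z) = k·ln(1 + exp(z/k)). Then the function f_σ(z) = σ(c/z)·z is monotonically increasing on (0, ∞): for all 0 < z₁ ≤ z₂, σ(c/z₁)·z₁ ≤ σ(c/z₂)·z₂. -/
/-- For `k, c > 0` and the softplus `σ(z) = k·ln(1 + exp(z/k))`, the function
`f_σ(z) = σ(c/z)·z` is monotonically increasing on `(0, ∞)`. -/
theorem stmt_8 (k c : ℝ) (hk : 0 < k) (hc : 0 < c) :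
    ∀ z₁ z₂ : ℝ, 0 < z₁ → z₁ ≤ z₂ →
      k * Real.log (1 + Real.exp ((c / z₁) / k)) * z₁ ≤
        k * Real.log (1 + Real.exp ((c / z₂) / k)) * z₂ := by
  set f : ℝ → ℝ := fun z => k * Real.log (1 + Real.exp ((c / z) / k)) * z with hf
  -- derivative at z > 0
  have hderiv : ∀ z : ℝ, 0 < z → HasDerivAt f
      (k * (Real.exp ((c / z) / k) * (c * (-(z ^ 2)⁻¹) / k) /
        (1 + Real.exp ((c / z) / k))) * z + k * Real.log (1 + Real.exp ((c / z) / k)) * 1) z := by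
    intro z hz
    have hu : HasDerivAt (fun z : ℝ => (c / z) / k) (c * (-(z ^ 2)⁻¹) / k) z := by
      have := ((hasDerivAt_inv hz.ne').const_mul c).div_const k
      simpa [div_eq_mul_inv] using this
    have hpos : (0:ℝ) < 1 + Real.exp ((c / z) / k) := by positivity
    have hlog := ((hu.exp.const_add 1).log hpos.ne')
    exact (hlog.const_mul k).mul (hasDerivAt_id z)
  have key : MonotoneOn f (Set.Ioi (0:ℝ)) := by
    apply monotoneOn_of_deriv_nonneg (convex_Ioi 0)
    · intro z hz
      exact (hderiv z hz).continuousAt.continuousWithinAt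
    · rw [interior_Ioi]
      intro z hz
      exact (hderiv z hz).differentiableAt.differentiableWithinAt
    · rw [interior_Ioi]
      intro z hz
      rw [(hderiv z hz).deriv]
      set E := Real.exp ((c / z) / k) with hE
      have hEpos : 0 < E := Real.exp_pos _
      have h1E : 0 < 1 + E := by positivity
      have hzpos : (0:ℝ) < z := hz
      -- log(1+E) ≥ c/z/k
      have hlogge : (c / z) / k ≤ Real.log (1 + E) := by
        have : E ≤ 1 + E := by linarith
        calc (c / z) / k = Real.log E := (Real.log_exp _).symm
          _ ≤ Real.log (1 + E) := Real.log_le_log hEpos this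
      -- first term ≥ -(c/z)
      have hterm1 : -(c / z) ≤ k * (E * (c * (-(z ^ 2)⁻¹) / k) / (1 + E)) * z := by
        have hratio : E / (1 + E) ≤ 1 := by
          rw [div_le_one h1E]; linarith
        have hratio0 : 0 ≤ E / (1 + E) := by positivity
        have heq : k * (E * (c * (-(z ^ 2)⁻¹) / k) / (1 + E)) * z
            = -((E / (1 + E)) * (c / z)) := by
          field_simp
        rw [heq, neg_le_neg_iff]
        have hcz : 0 < c / z := by positivity
        nlinarith
      have hterm2 : c / z ≤ k * Real.log (1 + E) * 1 := by
        have := mul_le_mul_of_nonneg_left hlogge hk.le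
        calc c / z = k * ((c / z) / k) := by field_simp
          _ ≤ k * Real.log (1 + E) := this
          _ = k * Real.log (1 + E) * 1 := by ring
      linarith
  intro z₁ z₂ h1 h12
  exact key (Set.mem_Ioi.2 h1) (Set.mem_Ioi.2 (lt_of_lt_of_le h1 h12)) h12
end

section
/- Let n be a positive integer, k > 0, Ξ > 0, and l > 0 real constants, and define the softplus function σ(z) = k·ln(1 + exp(z/k)). Let b, ξ ∈ ℝⁿ with b ≠ 0 and ‖ξ‖ ≤ Ξ, and let M be a symmetric n × n real matrix satisfying bᵀMb ≥ l·‖b‖². Then σ(bᵀξ/(bᵀMb))·‖b‖ ≤ k·ln(2)·‖b‖ + Ξ/l. -/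
lemma softplus_aux (x : ℝ) : Real.log (1 + Real.exp x) ≤ Real.log 2 + max x 0 := by
  rcases le_or_gt x 0 with h | h
  · have : (1 : ℝ) + Real.exp x ≤ 2 := by
      have := Real.exp_le_one_iff.mpr h; linarith
    calc Real.log (1 + Real.exp x) ≤ Real.log 2 :=
          Real.log_le_log (by positivity) this
      _ ≤ Real.log 2 + max x 0 := by simp [le_max_iff]
  · have h1 : (1 : ℝ) + Real.exp x ≤ 2 * Real.exp x := by
      have := Real.one_le_exp h.le; linarith
    calc Real.log (1 + Real.exp x) ≤ Real.log (2 * Real.exp x) :=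
          Real.log_le_log (by positivity) h1
      _ = Real.log 2 + x := by rw [Real.log_mul (by norm_num) (Real.exp_ne_zero x), Real.log_exp]
      _ ≤ Real.log 2 + max x 0 := by simp [le_max_iff]

/-- For `k, Ξ, l > 0`, softplus `σ(z) = k·ln(1 + exp(z/k))`, vectors
`b ≠ 0`, `‖ξ‖ ≤ Ξ` in `ℝⁿ`, and a symmetric matrix `M` with `bᵀMb ≥ l·‖b‖²`, one has
`σ(bᵀξ/(bᵀMb))·‖b‖ ≤ k·ln(2)·‖b‖ + Ξ/l`. -/
theorem stmt_11 {n : ℕ} (hn : 0 < n) (k Ξ l : ℝ) (hk : 0 < k) (hΞ : 0 < Ξ) (hl : 0 < l)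
    (b ξ : EuclideanSpace ℝ (Fin n)) (M : Matrix (Fin n) (Fin n) ℝ)
    (hb : b ≠ 0) (hξ : ‖ξ‖ ≤ Ξ) (hsymm : M.IsSymm)
    (hMb : l * ‖b‖ ^ 2 ≤ ∑ i, ∑ j, b i * M i j * b j) :
    k * Real.log (1 + Real.exp
        (((∑ i, b i * ξ i) / (∑ i, ∑ j, b i * M i j * b j)) / k)) * ‖b‖
      ≤ k * Real.log 2 * ‖b‖ + Ξ / l := by
  set q : ℝ := ∑ i, ∑ j, b i * M i j * b j with hq
  set c : ℝ := ∑ i, b i * ξ i with hc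
  have hbn : 0 < ‖b‖ := norm_pos_iff.mpr hb
  have hq0 : 0 < q := lt_of_lt_of_le (by positivity) hMb
  have hcs : c ≤ ‖b‖ * Ξ := by
    have h1 : c = inner ℝ b ξ := by
      rw [PiLp.inner_apply]; simp [hc, mul_comm]
    have := real_inner_le_norm b ξ
    rw [← h1] at this
    calc c ≤ ‖b‖ * ‖ξ‖ := this
      _ ≤ ‖b‖ * Ξ := by nlinarith
  set x : ℝ := (c / q) / k with hx
  have key : Real.log (1 + Real.exp x) ≤ Real.log 2 + max x 0 := softplus_aux x
  have hmax : k * max x 0 * ‖b‖ ≤ Ξ / l := by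
    rcases le_or_gt c 0 with h | h
    · have : x ≤ 0 := by
        apply div_nonpos_of_nonpos_of_nonneg (div_nonpos_of_nonpos_of_nonneg h hq0.le) hk.le
      rw [max_eq_right this, mul_zero, zero_mul]
      positivity
    · have hx0 : 0 ≤ x := by positivity
      rw [max_eq_left hx0, hx]
      have h1 : c / q ≤ (‖b‖ * Ξ) / (l * ‖b‖ ^ 2) :=
        div_le_div₀ (by positivity) hcs (by positivity) hMb
      have h2 : (‖b‖ * Ξ) / (l * ‖b‖ ^ 2) * ‖b‖ = Ξ / l := by
        field_simp
      calc k * (c / q / k) * ‖b‖ = c / q * ‖b‖ := by field_simp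
        _ ≤ (‖b‖ * Ξ) / (l * ‖b‖ ^ 2) * ‖b‖ := by
            exact mul_le_mul_of_nonneg_right h1 hbn.le
        _ = Ξ / l := h2
  calc k * Real.log (1 + Real.exp x) * ‖b‖
      ≤ k * (Real.log 2 + max x 0) * ‖b‖ := by
        apply mul_le_mul_of_nonneg_right _ hbn.le
        exact mul_le_mul_of_nonneg_left key hk.le
    _ = k * Real.log 2 * ‖b‖ + k * max x 0 * ‖b‖ := by ring
    _ ≤ k * Real.log 2 * ‖b‖ + Ξ / l := by linarith
end

section
/- Let n be a positive integer, β > 0, and x ∈ ℝⁿ with ‖x‖ < β (Euclidean norm). Then β·‖x‖/(β² − ‖x‖²) ≥ ln(β²/(β² − ‖x‖²)). Consequently, the barrier Lyapunov function B_f(x) = ln(β²/(β² − xᵀx)) on the ball {x : ‖x‖ ≤ β}, whose gradient is ∇B_f(x) = 2x/(β² − ‖x‖²), satisfies γ·‖∇B_f(x)‖ ≥ B_f(x) for all ‖x‖ < β with γ = β/2. -/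
/-- For `β > 0` and `x ∈ ℝⁿ` with `‖x‖ < β`,
`β·‖x‖/(β² − ‖x‖²) ≥ ln(β²/(β² − ‖x‖²))`; consequently the BLF
`B_f(x) = ln(β²/(β² − xᵀx))` with gradient `∇B_f(x) = 2x/(β² − ‖x‖²)` satisfies
`γ·‖∇B_f(x)‖ ≥ B_f(x)` with `γ = β/2`. -/
theorem stmt_16 {n : ℕ} (hn : 0 < n) (β : ℝ) (hβ : 0 < β)
    (x : EuclideanSpace ℝ (Fin n)) (hx : ‖x‖ < β) :
    β * ‖x‖ / (β ^ 2 - ‖x‖ ^ 2) ≥ Real.log (β ^ 2 / (β ^ 2 - ‖x‖ ^ 2)) ∧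
    (β / 2) * ‖(2 / (β ^ 2 - ‖x‖ ^ 2)) • x‖ ≥ Real.log (β ^ 2 / (β ^ 2 - ‖x‖ ^ 2)) := by
  set r := ‖x‖ with hr
  have hr0 : 0 ≤ r := norm_nonneg x
  have hd : 0 < β ^ 2 - r ^ 2 := by nlinarith
  have h1 : Real.log (β ^ 2 / (β ^ 2 - r ^ 2)) ≤ β ^ 2 / (β ^ 2 - r ^ 2) - 1 :=
    Real.log_le_sub_one_of_pos (div_pos (by positivity) hd)
  have h2 : β ^ 2 / (β ^ 2 - r ^ 2) - 1 = r ^ 2 / (β ^ 2 - r ^ 2) := by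
    field_simp; ring
  have h3 : r ^ 2 / (β ^ 2 - r ^ 2) ≤ β * r / (β ^ 2 - r ^ 2) := by
    gcongr
    nlinarith
  have main : β * r / (β ^ 2 - r ^ 2) ≥ Real.log (β ^ 2 / (β ^ 2 - r ^ 2)) := by
    calc Real.log (β ^ 2 / (β ^ 2 - r ^ 2)) ≤ r ^ 2 / (β ^ 2 - r ^ 2) := by rw [← h2]; exact h1
      _ ≤ β * r / (β ^ 2 - r ^ 2) := h3
  refine ⟨main, ?_⟩
  have hnorm : ‖(2 / (β ^ 2 - r ^ 2)) • x‖ = (2 / (β ^ 2 - r ^ 2)) * r := by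
    rw [norm_smul, Real.norm_eq_abs, abs_of_pos (by positivity)]
  rw [hnorm]
  have : β / 2 * (2 / (β ^ 2 - r ^ 2) * r) = β * r / (β ^ 2 - r ^ 2) := by
    field_simp
  rw [this]; exact main
end
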